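/- For every even integer N ≥ 2, the rescaled fermionic modes satisfy {η^+_n, η^-_{n'}} = n δ_{n+n',0} for all −N/2 < n, n' < N/2, and {η^+_0, γ^-} = 1 and {η^-_0, γ^+} = −1. -/

import Mathlib

open Matrix Complex BigOperators Finset

noncomputable section

namespace LatticeW

/-- basis states of the chain of `N` spin-1/2 sites -/
abbrev St (N : ℕ) := Fin N → Fin 2
/-- operators on `ℂ^{2^N}` -/
abbrev Op (N : ℕ) := Matrix (St N) (St N) ℂ

def σx : Matrix (Fin 2) (Fin 2) ℂ := !![0, 1; 1, 0]
def σy : Matrix (Fin 2) (Fin 2) ℂ := !![0, -Complex.I; Complex.I, 0]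
def σz : Matrix (Fin 2) (Fin 2) ℂ := !![1, 0; 0, -1]
def σp : Matrix (Fin 2) (Fin 2) ℂ := (1/2 : ℂ) • (σx + Complex.I • σy)
def σm : Matrix (Fin 2) (Fin 2) ℂ := (1/2 : ℂ) • (σx - Complex.I • σy)

/-- the operator acting as `M` on the (0-indexed) site `j` and as the identity
elsewhere; junk value `0` if `j` is out of range. -/
def site (N : ℕ) (j : ℕ) (M : Matrix (Fin 2) (Fin 2) ℂ) : Op N :=
  if h : j < N then
    (fun v w => if ∀ l, l ≠ (⟨j, h⟩ : Fin N) → v l = w l then M (v ⟨j, h⟩) (w ⟨j, h⟩) else 0)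
  else 0

/-- diagonal value of σ^z on a one-site basis state -/
def zval (t : Fin 2) : ℂ := if t = 0 then 1 else -1

/-- Jordan–Wigner creation operator `c_j†` (0-indexed `j`; paper index `j+1`):
`c_j† = i^{j} (∏_{l<j} i σ^z_l) σ^+_j`. -/
def ad (N : ℕ) (j : ℕ) : Op N :=
  Complex.I ^ j •
    (Matrix.diagonal (fun v : St N =>
        ∏ l ∈ Finset.univ.filter (fun l : Fin N => (l : ℕ) < j), (Complex.I * zval (v l)))
      * site N j σp)

/-- Jordan–Wigner annihilation operator `c_j` (0-indexed `j`):
`c_j = i^{-j} (∏_{l<j} (i σ^z_l)⁻¹) σ^-_j`. -/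
def an (N : ℕ) (j : ℕ) : Op N :=
  (Complex.I ^ j)⁻¹ •
    (Matrix.diagonal (fun v : St N =>
        ∏ l ∈ Finset.univ.filter (fun l : Fin N => (l : ℕ) < j), (Complex.I * zval (v l))⁻¹)
      * site N j σm)

/-- Temperley–Lieb density `e_{j+1}` of the paper (0-indexed `j`). -/
def eTL (N : ℕ) (j : ℕ) : Op N :=
  an N j * ad N (j+1) + an N (j+1) * ad N j
    + Complex.I • (ad N j * an N j - ad N (j+1) * an N (j+1))

/-- the XX Hamiltonian `H = -∑ e_j`. -/
def Hop (N : ℕ) : Op N := -∑ j ∈ Finset.range (N - 1), eTL N j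

/-- `ρ(K) = ⊗_j (i σ^z)`. -/
def Kop (N : ℕ) : Op N := Matrix.diagonal (fun v : St N => ∏ l, (Complex.I * zval (v l)))

/-- `ρ(E) = (∑_{j=1}^N i^j c_j†) ρ(K)` (paper indices). -/
def Eop (N : ℕ) : Op N := (∑ j ∈ Finset.range N, Complex.I ^ (j+1) • ad N j) * Kop N

/-- `ρ(F) = ∑_{j=1}^N i^{j-1} c_j` (paper indices). -/
def Fop (N : ℕ) : Op N := ∑ j ∈ Finset.range N, Complex.I ^ j • an N j

/-- divided power `ρ(e) = ∑_{j1<j2} (-1)^{j1+j2} i^{1-j1-j2} c_{j1}† c_{j2}†` (paper indices). -/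
def sl2e (N : ℕ) : Op N :=
  ∑ j2 ∈ Finset.range N, ∑ j1 ∈ Finset.range j2,
    ((-1 : ℂ) ^ (j1 + j2) * (Complex.I ^ (j1 + j2 + 1))⁻¹) • (ad N j1 * ad N j2)

/-- divided power `ρ(f) = ∑_{j1<j2} i^{j1+j2-1} c_{j1} c_{j2}` (paper indices). -/
def sl2f (N : ℕ) : Op N :=
  ∑ j2 ∈ Finset.range N, ∑ j1 ∈ Finset.range j2,
    (Complex.I ^ (j1 + j2 + 1)) • (an N j1 * an N j2)

/-- `WB^+_{j+1}` of the paper (0-indexed `j`). -/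
def WBp (N : ℕ) (j : ℕ) : Op N :=
  (-1 : ℂ) ^ (j+1) •
    (ad N j * ad N (j+1) + Complex.I • (ad N j * ad N (j+2)) - ad N (j+1) * ad N (j+2))

/-- `WB^0_{j+1}` of the paper (0-indexed `j`). -/
def WB0 (N : ℕ) (j : ℕ) : Op N :=
  (-(1/2) : ℂ) •
    ((1 : Op N) + Complex.I • (ad N j * an N (j+1)) - ad N j * an N (j+2)
      + Complex.I • (ad N (j+1) * an N j) - (2 : ℂ) • (ad N (j+1) * an N (j+1))
      - Complex.I • (ad N (j+1) * an N (j+2)) - ad N (j+2) * an N j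
      - Complex.I • (ad N (j+2) * an N (j+1)))

/-- `WB^-_{j+1}` of the paper (0-indexed `j`). -/
def WBm (N : ℕ) (j : ℕ) : Op N :=
  (-1 : ℂ) ^ j •
    (an N j * an N (j+1) + Complex.I • (an N j * an N (j+2)) - an N (j+1) * an N (j+2))

/-- `WB^α_j` with `α = 0 ↦ +`, `α = 1 ↦ 0`, `α = 2 ↦ -`. -/
def WB (N : ℕ) (α : Fin 3) (j : ℕ) : Op N :=
  match α with
  | 0 => WBp N j
  | 1 => WB0 N j
  | 2 => WBm N j

/-- the Fourier amplitudes `A_k(j)` (both `k` and `j` paper-indexed). -/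
def Afun (N k j : ℕ) : ℂ :=
  (1/2 : ℂ) * (1 + Complex.I * Complex.exp (-(Complex.I * (Real.pi : ℂ) * (k : ℂ) / (N : ℂ))))
      * Complex.exp (Complex.I * (Real.pi : ℂ) * (k : ℂ) * (j : ℂ) / (N : ℂ))
  - (1/2 : ℂ) * (1 + Complex.I * Complex.exp (Complex.I * (Real.pi : ℂ) * (k : ℂ) / (N : ℂ)))
      * Complex.exp (-(Complex.I * (Real.pi : ℂ) * (k : ℂ) * (j : ℂ) / (N : ℂ)))

/-- `θ†_k = ∑_{j=1}^N A_k(j) c_j†` (paper indices). -/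
def θd (N k : ℕ) : Op N := ∑ j ∈ Finset.range N, Afun N k (j+1) • ad N j

/-- `θ_k = -i ∑_{j=1}^N A_k(j) c_j` (paper indices). -/
def θa (N k : ℕ) : Op N := (-Complex.I) • ∑ j ∈ Finset.range N, Afun N k (j+1) • an N j

/-- the normalization `sqrt(n/(N sin(πn/N)))` for `n ≠ 0`, and `1/√π` for `n = 0`. -/
def ηcoef (N : ℕ) (n : ℤ) : ℂ :=
  if n = 0 then ((Real.sqrt Real.pi)⁻¹ : ℝ)
  else ((Real.sqrt ((n : ℝ) / ((N : ℝ) * Real.sin (Real.pi * (n : ℝ) / (N : ℝ)))) : ℝ) : ℂ)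

/-- `η^+_n` -/
def ηp (N : ℕ) (n : ℤ) : Op N := ηcoef N n • θd N ((N : ℤ)/2 + n).toNat

/-- `η^-_n` -/
def ηm (N : ℕ) (n : ℤ) : Op N := ηcoef N n • θa N ((N : ℤ)/2 - n).toNat

/-- coefficient `(N/2 - j + (1-(-1)^j)/2) i^j` (paper index `j`). -/
def γcoef (N j : ℕ) : ℂ :=
  ((N : ℂ)/2 - (j : ℂ) + (1 - (-1 : ℂ)^j)/2) * Complex.I ^ j

/-- the root vector `γ^+`. -/
def γp (N : ℕ) : Op N :=
  (Complex.I * (Real.sqrt Real.pi : ℂ) / (N : ℂ)) •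
    ∑ j ∈ Finset.range N, γcoef N (j+1) • ad N j

/-- the root vector `γ^-`. -/
def γm (N : ℕ) : Op N :=
  (-((Real.sqrt Real.pi : ℂ) / (N : ℂ))) •
    ∑ j ∈ Finset.range N, γcoef N (j+1) • an N j

/-- Kronecker delta -/
def kδ (a b : ℤ) : ℂ := if a = b then 1 else 0

/-- `s(j) = sqrt(sin(πj/N)/j)` with the convention `π/N` at `j = 0`. -/
def sfun (N : ℕ) (j : ℤ) : ℂ :=
  if j = 0 then ((Real.sqrt (Real.pi / (N : ℝ)) : ℝ) : ℂ)
  else ((Real.sqrt (Real.sin (Real.pi * (j : ℝ) / (N : ℝ)) / (j : ℝ)) : ℝ) : ℂ)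

/-- the index range `-N/2+1 ≤ j ≤ N/2-1`. -/
def modeRange (N : ℕ) : Finset ℤ := Finset.Icc (-(N : ℤ)/2 + 1) ((N : ℤ)/2 - 1)

/-- the coefficient appearing in `Ĥ^r_n`. -/
def Hcoef (N : ℕ) (r : ℕ) (n j1 j2 : ℤ) : ℂ :=
  ((Real.cos (Real.pi * ((j1 - j2 : ℤ) : ℝ) / (2 * (N : ℝ))) : ℝ) : ℂ)^r *
      ((-1 : ℂ)^r * kδ (j1 + j2) n + kδ (j1 + j2) (-n))
    - ((Real.sin (Real.pi * ((j1 + j2 : ℤ) : ℝ) / (2 * (N : ℝ))) : ℝ) : ℂ)^r *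
      (kδ (j1 - j2) ((N : ℤ) + n) + kδ (j1 - j2) (-(N : ℤ) - n)
        + (-1 : ℂ)^r * kδ (j1 - j2) ((N : ℤ) - n) + (-1 : ℂ)^r * kδ (j1 - j2) (-(N : ℤ) + n))

/-- the lattice Virasoro mode `Ĥ^r_n`. -/
def Hhat (N : ℕ) (r : ℕ) (n : ℤ) : Op N :=
  ∑ j1 ∈ modeRange N, ∑ j2 ∈ modeRange N,
    (sfun N j1 * sfun N j2 * Hcoef N r n j1 j2) • (ηp N j1 * ηm N j2)

/-- the coefficient `U_{r,n}(j1,j2)`. -/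
def Ucoef (N : ℕ) (r : ℕ) (n j1 j2 : ℤ) : ℂ :=
  ((Real.sin (Real.pi * ((j1 - j2 : ℤ) : ℝ) / (2 * (N : ℝ))) : ℝ) : ℂ)
      * ((Real.cos (Real.pi * ((j1 - j2 : ℤ) : ℝ) / (2 * (N : ℝ))) : ℝ) : ℂ)^r
      * ((-1 : ℂ)^r * kδ (j1 + j2) n + kδ (j1 + j2) (-n))
    + 2 * ((Real.cos (Real.pi * ((j1 + j2 : ℤ) : ℝ) / (2 * (N : ℝ))) : ℝ) : ℂ)
      * ((Real.sin (Real.pi * ((j1 + j2 : ℤ) : ℝ) / (2 * (N : ℝ))) : ℝ) : ℂ)^r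
      * (kδ (j1 - j2) (-(N : ℤ) - n) + (-1 : ℂ)^r * kδ (j1 - j2) (-(N : ℤ) + n))

/-- the lattice W-algebra mode `Ŵ^{α,r}_n` with `α = 0 ↦ +`, `α = 1 ↦ 0`, `α = 2 ↦ -`. -/
def What (N : ℕ) (α : Fin 3) (r : ℕ) (n : ℤ) : Op N :=
  ∑ j1 ∈ modeRange N, ∑ j2 ∈ modeRange N,
    (sfun N j1 * sfun N j2 * Ucoef N r n j1 j2) •
      (match α with
        | 0 => ηp N j1 * ηp N j2
        | 1 => ηp N j1 * ηm N j2 + ηm N j1 * ηp N j2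
        | 2 => ηm N j1 * ηm N j2)

/-- the all-spins-down reference state. -/
def downSt (N : ℕ) : St N → ℂ := fun v => if ∀ j, v j = 1 then 1 else 0

/-- the vacuum `|0⟩ = θ†_{N/2} θ†_{N/2+1} ⋯ θ†_{N-1} |↓…↓⟩`. -/
def vac (N : ℕ) : St N → ℂ :=
  (((List.range (N/2)).map (fun t => θd N (N/2 + t))).prod).mulVec (downSt N)

/-- the logarithmic partner `|0̃⟩ = γ^+ θ†_{N/2+1} ⋯ θ†_{N-1} |↓…↓⟩`. -/
def vacTilde (N : ℕ) : St N → ℂ :=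
  (γp N * (((List.range (N/2 - 1)).map (fun t => θd N (N/2 + 1 + t))).prod)).mulVec (downSt N)

/-- the total spin `S^z = ½ ∑_j σ^z_j`. -/
def Sz (N : ℕ) : Op N := (1/2 : ℂ) • ∑ j ∈ Finset.range N, site N j σz

/- ************ XXZ spin-chain at generic q (statement 19) ************ -/

/-- the single-site diagonal `diag(q, q⁻¹)` evaluated on a basis state. -/
def dq (q : ℂ) : Fin 2 → ℂ := fun t => if t = 0 then q else q⁻¹

/-- the XXZ Temperley–Lieb density `e_{i+1}` of the paper (0-indexed `i`). -/
def eXXZ (N : ℕ) (q : ℂ) (i : ℕ) : Op N :=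
  ((q + q⁻¹)/4) • (1 : Op N)
    - (1/2 : ℂ) • (site N i σx * site N (i+1) σx + site N i σy * site N (i+1) σy)
    - ((q + q⁻¹)/4) • (site N i σz * site N (i+1) σz)
    + ((q - q⁻¹)/4) • (site N i σz - site N (i+1) σz)

/-- the XXZ Hamiltonian with quantum-group symmetric boundary terms. -/
def HXXZ (N : ℕ) (q : ℂ) : Op N :=
  (1/2 : ℂ) • ∑ i ∈ Finset.range (N - 1),
      (site N i σx * site N (i+1) σx + site N i σy * site N (i+1) σy
        + ((q + q⁻¹)/2) • (site N i σz * site N (i+1) σz))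
    - ((q - q⁻¹)/4) • (site N 0 σz - site N (N-1) σz)

/-- `K_N = ⊗_j diag(q,q⁻¹)`. -/
def KXXZ (N : ℕ) (q : ℂ) : Op N := Matrix.diagonal (fun v : St N => ∏ l, dq q (v l))

/-- `E_N = ∑_j σ^+_j ⊗ ∏_{l>j} diag(q,q⁻¹)_l`. -/
def EXXZ (N : ℕ) (q : ℂ) : Op N :=
  ∑ j ∈ Finset.range N,
    site N j σp *
      Matrix.diagonal (fun v : St N =>
        ∏ l ∈ Finset.univ.filter (fun l : Fin N => j < (l : ℕ)), dq q (v l))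

/-- `F_N = ∑_j (∏_{l<j} diag(q⁻¹,q)_l) ⊗ σ^-_j`. -/
def FXXZ (N : ℕ) (q : ℂ) : Op N :=
  ∑ j ∈ Finset.range N,
    Matrix.diagonal (fun v : St N =>
        ∏ l ∈ Finset.univ.filter (fun l : Fin N => (l : ℕ) < j), (dq q (v l))⁻¹) *
      site N j σm

end LatticeW

namespace LatticeW

variable {N : ℕ}

lemma site_apply {j : ℕ} (h : j < N) (M : Matrix (Fin 2) (Fin 2) ℂ) (v w : St N) :
    site N j M v w =
      if ∀ l, l ≠ (⟨j, h⟩ : Fin N) → v l = w l then M (v ⟨j, h⟩) (w ⟨j, h⟩) else 0 := by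
  have e : site N j M = ((fun v w => if ∀ l, l ≠ (⟨j, h⟩ : Fin N) → v l = w l then
      M (v ⟨j, h⟩) (w ⟨j, h⟩) else 0) : Op N) := dif_pos h
  rw [e]

lemma diag_site_comm {j : ℕ} (h : j < N) (d : St N → ℂ) (M : Matrix (Fin 2) (Fin 2) ℂ)
    (hd : ∀ v w : St N, (∀ l, l ≠ (⟨j, h⟩ : Fin N) → v l = w l) → d v = d w) :
    Matrix.diagonal d * site N j M = site N j M * Matrix.diagonal d := by
  ext v w
  rw [Matrix.diagonal_mul, Matrix.mul_diagonal, site_apply h]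
  by_cases hc : ∀ l, l ≠ (⟨j, h⟩ : Fin N) → v l = w l
  · rw [if_pos hc, hd v w hc, mul_comm]
  · rw [if_neg hc, mul_zero, zero_mul]

lemma diag_site_anticomm {j : ℕ} (h : j < N) (d : St N → ℂ) (M : Matrix (Fin 2) (Fin 2) ℂ)
    (hM : ∀ t, M t t = 0)
    (hd : ∀ v w : St N, (∀ l, l ≠ (⟨j, h⟩ : Fin N) → v l = w l) →
      v ⟨j, h⟩ ≠ w ⟨j, h⟩ → d v = -d w) :
    Matrix.diagonal d * site N j M = -(site N j M * Matrix.diagonal d) := by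
  ext v w
  rw [Matrix.neg_apply, Matrix.diagonal_mul, Matrix.mul_diagonal, site_apply h]
  by_cases hc : ∀ l, l ≠ (⟨j, h⟩ : Fin N) → v l = w l
  · rw [if_pos hc]
    by_cases he : v ⟨j, h⟩ = w ⟨j, h⟩
    · rw [he, hM]; ring
    · rw [hd v w hc he]; ring
  · rw [if_neg hc, mul_zero, zero_mul, neg_zero]

lemma site_mul_site_same {j : ℕ} (h : j < N) (M M' : Matrix (Fin 2) (Fin 2) ℂ) :
    site N j M * site N j M' = site N j (M * M') := by
  ext v w
  rw [Matrix.mul_apply]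
  simp only [site_apply h]
  by_cases hc : ∀ l, l ≠ (⟨j, h⟩ : Fin N) → v l = w l
  · rw [if_pos hc]
    have hsub : ∀ u : St N, u ∉ Finset.image (fun t => Function.update v (⟨j, h⟩ : Fin N) t)
        Finset.univ →
        (if ∀ l, l ≠ (⟨j, h⟩ : Fin N) → v l = u l then M (v ⟨j, h⟩) (u ⟨j, h⟩) else 0) *
          (if ∀ l, l ≠ (⟨j, h⟩ : Fin N) → u l = w l then M' (u ⟨j, h⟩) (w ⟨j, h⟩) else 0) = 0 := by
      intro u hu
      rw [if_neg, zero_mul]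
      intro hvu
      apply hu
      refine Finset.mem_image.2 ⟨u ⟨j, h⟩, Finset.mem_univ _, ?_⟩
      funext l
      by_cases hl : l = (⟨j, h⟩ : Fin N)
      · subst hl; simp
      · rw [Function.update_of_ne hl, hvu l hl]
    rw [← Finset.sum_subset (Finset.subset_univ _) (fun u _ hu => hsub u hu)]
    rw [Finset.sum_image (by
      intro a _ b _ hab
      have := congrFun hab (⟨j, h⟩ : Fin N)
      simpa using this)]
    rw [Matrix.mul_apply]
    apply Finset.sum_congr rfl
    intro t _
    rw [if_pos, if_pos]
    · simp
    · intro l hl; rw [Function.update_of_ne hl]; exact hc l hl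
    · intro l hl; rw [Function.update_of_ne hl]
  · rw [if_neg hc]
    apply Finset.sum_eq_zero
    intro u _
    by_cases h1 : ∀ l, l ≠ (⟨j, h⟩ : Fin N) → v l = u l
    · have h2 : ¬∀ l, l ≠ (⟨j, h⟩ : Fin N) → u l = w l :=
        fun h2 => hc fun l hl => (h1 l hl).trans (h2 l hl)
      rw [if_pos h1, if_neg h2, mul_zero]
    · rw [if_neg h1, zero_mul]

lemma site_mul_site_ne {j k : ℕ} (hj : j < N) (hk : k < N) (hjk : j ≠ k)
    (M M' : Matrix (Fin 2) (Fin 2) ℂ) (v w : St N) :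
    (site N j M * site N k M') v w =
      if ∀ l, l ≠ (⟨j, hj⟩ : Fin N) → l ≠ (⟨k, hk⟩ : Fin N) → v l = w l then
        M (v ⟨j, hj⟩) (w ⟨j, hj⟩) * M' (v ⟨k, hk⟩) (w ⟨k, hk⟩) else 0 := by
  have hne : (⟨j, hj⟩ : Fin N) ≠ ⟨k, hk⟩ := by simp [Fin.ext_iff, hjk]
  rw [Matrix.mul_apply]
  simp only [site_apply hj, site_apply hk]
  by_cases hc : ∀ l, l ≠ (⟨j, hj⟩ : Fin N) → l ≠ (⟨k, hk⟩ : Fin N) → v l = w l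
  · rw [if_pos hc]
    rw [Finset.sum_eq_single (Function.update v (⟨j, hj⟩ : Fin N) (w ⟨j, hj⟩))]
    · rw [if_pos, if_pos]
      · rw [Function.update_self, Function.update_of_ne (Ne.symm hne)]
      · intro l hl
        by_cases hlj : l = (⟨j, hj⟩ : Fin N)
        · subst hlj; rw [Function.update_self]
        · rw [Function.update_of_ne hlj]; exact hc l hlj hl
      · intro l hl; rw [Function.update_of_ne hl]
    · intro u _ hu
      by_cases h1 : ∀ l, l ≠ (⟨j, hj⟩ : Fin N) → v l = u l
      · rw [if_pos h1, if_neg (fun h2 => hu (funext fun l => by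
          by_cases hlj : l = (⟨j, hj⟩ : Fin N)
          · subst hlj; rw [Function.update_self, h2 _ hne]
          · rw [Function.update_of_ne hlj, h1 l hlj])), mul_zero]
      · rw [if_neg h1, zero_mul]
    · intro hmem; exact absurd (Finset.mem_univ _) hmem
  · rw [if_neg hc]
    apply Finset.sum_eq_zero
    intro u _
    by_cases h1 : ∀ l, l ≠ (⟨j, hj⟩ : Fin N) → v l = u l
    · rw [if_pos h1,
        if_neg (fun h2 => hc fun l hl1 hl2 => (h1 l hl1).trans (h2 l hl2)), mul_zero]
    · rw [if_neg h1, zero_mul]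

lemma site_comm {j k : ℕ} (hj : j < N) (hk : k < N) (hjk : j ≠ k)
    (M M' : Matrix (Fin 2) (Fin 2) ℂ) :
    site N j M * site N k M' = site N k M' * site N j M := by
  ext v w
  rw [site_mul_site_ne hj hk hjk, site_mul_site_ne hk hj (Ne.symm hjk)]
  by_cases hc : ∀ l, l ≠ (⟨j, hj⟩ : Fin N) → l ≠ (⟨k, hk⟩ : Fin N) → v l = w l
  · rw [if_pos hc, if_pos (fun l h1 h2 => hc l h2 h1), mul_comm]
  · rw [if_neg hc, if_neg (fun h => hc (fun l h1 h2 => h l h2 h1))]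

lemma site_one {j : ℕ} (h : j < N) : site N j (1 : Matrix (Fin 2) (Fin 2) ℂ) = 1 := by
  ext v w
  rw [site_apply h, Matrix.one_apply]
  by_cases hc : ∀ l, l ≠ (⟨j, h⟩ : Fin N) → v l = w l
  · rw [if_pos hc, Matrix.one_apply]
    by_cases he : v = w
    · rw [if_pos he, if_pos (congrFun he _)]
    · rw [if_neg he, if_neg]
      intro hh
      exact he (funext fun l => by by_cases hl : l = (⟨j, h⟩ : Fin N)
                                   · subst hl; exact hh
                                   · exact hc l hl)
  · rw [if_neg hc, eq_comm, Matrix.one_apply_ne]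
    intro he; subst he; exact hc fun l _ => rfl

end LatticeW

namespace LatticeW

variable {N : ℕ}

/-- the Jordan-Wigner string -/
def dstr (N j : ℕ) : St N → ℂ := fun v =>
  ∏ l ∈ Finset.univ.filter (fun l : Fin N => (l : ℕ) < j), (Complex.I * zval (v l))

lemma zval_ne_zero (t : Fin 2) : zval t ≠ 0 := by
  fin_cases t <;> simp [zval]

lemma zval_flip {t t' : Fin 2} (h : t ≠ t') : zval t = -zval t' := by
  fin_cases t <;> fin_cases t' <;> simp_all [zval]

lemma dstr_ne_zero (j : ℕ) (v : St N) : dstr N j v ≠ 0 :=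
  Finset.prod_ne_zero_iff.2 fun l _ => mul_ne_zero Complex.I_ne_zero (zval_ne_zero _)

lemma dstr_congr {j : ℕ} {v w : St N} (h : ∀ l : Fin N, (l : ℕ) < j → v l = w l) :
    dstr N j v = dstr N j w :=
  Finset.prod_congr rfl fun l hl => by
    rw [h l (by simpa using (Finset.mem_filter.1 hl).2)]

lemma dstr_flip {j k : ℕ} (hjN : j < N) (hjk : j < k) {v w : St N}
    (hagree : ∀ l, l ≠ (⟨j, hjN⟩ : Fin N) → v l = w l)
    (hne : v ⟨j, hjN⟩ ≠ w ⟨j, hjN⟩) :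
    dstr N k v = -dstr N k w := by
  have hmem : (⟨j, hjN⟩ : Fin N) ∈ Finset.univ.filter (fun l : Fin N => (l : ℕ) < k) := by
    simp [hjk]
  have he : ∀ l ∈ (Finset.univ.filter (fun l : Fin N => (l : ℕ) < k)).erase ⟨j, hjN⟩,
      Complex.I * zval (v l) = Complex.I * zval (w l) := fun l hl => by
    rw [hagree l (Finset.ne_of_mem_erase hl)]
  rw [dstr, dstr, ← Finset.mul_prod_erase _ _ hmem, ← Finset.mul_prod_erase _ _ hmem,
    Finset.prod_congr rfl he, zval_flip hne]
  ring

lemma ad_eq (j : ℕ) : ad N j =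
    Complex.I ^ j • (Matrix.diagonal (dstr N j) * site N j σp) := rfl

lemma an_eq (j : ℕ) : an N j =
    (Complex.I ^ j)⁻¹ • (Matrix.diagonal (fun v => (dstr N j v)⁻¹) * site N j σm) := by
  simp only [an, dstr, Finset.prod_inv_distrib]

lemma σp_eq : σp = !![0, 1; 0, 0] := by
  rw [σp, σx, σy]
  ext i j
  fin_cases i <;> fin_cases j <;>
    simp [Matrix.smul_apply, Matrix.add_apply] <;> ring_nf <;>
    simp [Complex.I_sq, Complex.I_mul_I]

lemma σm_eq : σm = !![0, 0; 1, 0] := by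
  rw [σm, σx, σy]
  ext i j
  fin_cases i <;> fin_cases j <;>
    simp [Matrix.smul_apply, Matrix.sub_apply] <;> ring_nf <;>
    simp [Complex.I_sq, Complex.I_mul_I]

lemma σp_diag (t : Fin 2) : σp t t = 0 := by
  fin_cases t <;> simp [σp_eq]

lemma σm_diag (t : Fin 2) : σm t t = 0 := by
  fin_cases t <;> simp [σm_eq]

lemma σmp : σm * σp + σp * σm = 1 := by
  rw [σp_eq, σm_eq]
  ext i j
  fin_cases i <;> fin_cases j <;>
    simp [Matrix.mul_apply, Fin.sum_univ_two, Matrix.one_apply, Matrix.add_apply]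

lemma site_add {j : ℕ} (h : j < N) (A B : Matrix (Fin 2) (Fin 2) ℂ) :
    site N j (A + B) = site N j A + site N j B := by
  ext v w
  rw [Matrix.add_apply, site_apply h, site_apply h, site_apply h]
  split_ifs <;> simp [Matrix.add_apply]

/-- diag built from string of length j commutes with a site operator at j' ≥ j -/
lemma diag_dstr_comm {j j' : ℕ} (h : j' < N) (hjj' : j ≤ j') (M : Matrix (Fin 2) (Fin 2) ℂ)
    (f : ℂ → ℂ) :
    Matrix.diagonal (fun v => f (dstr N j v)) * site N j' M
      = site N j' M * Matrix.diagonal (fun v => f (dstr N j v)) := by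
  refine diag_site_comm h _ _ (fun v w hvw => ?_)
  have : dstr N j v = dstr N j w :=
    dstr_congr fun l hl => hvw l (fun he => by subst he; simp at hl; omega)
  rw [this]

/-- diag built from string of length k anticommutes with `σ^±` at site j < k -/
lemma diag_dstr_anticomm {j k : ℕ} (h : j < N) (hjk : j < k) (M : Matrix (Fin 2) (Fin 2) ℂ)
    (hM : ∀ t, M t t = 0) (f : ℂ → ℂ) (hf : ∀ x, f (-x) = -f x) :
    Matrix.diagonal (fun v => f (dstr N k v)) * site N j M
      = -(site N j M * Matrix.diagonal (fun v => f (dstr N k v))) := by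
  apply diag_site_anticomm h _ _ hM
  intro v w hvw hne
  rw [dstr_flip h hjk hvw hne, hf]

lemma diag_one_of (d : St N → ℂ) (hd : ∀ v, d v ≠ 0) :
    Matrix.diagonal (fun v => (d v)⁻¹) * Matrix.diagonal d = 1 := by
  rw [Matrix.diagonal_mul_diagonal]
  convert Matrix.diagonal_one using 2
  ext v
  exact inv_mul_cancel₀ (hd v)

lemma car {j k : ℕ} (hj : j < N) (hk : k < N) :
    an N j * ad N k + ad N k * an N j = if j = k then (1 : Op N) else 0 := by
  set Dp : ℕ → Op N := fun m => Matrix.diagonal (dstr N m) with hDp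
  set Dm : ℕ → Op N := fun m => Matrix.diagonal (fun v => (dstr N m v)⁻¹) with hDm
  have hprod : an N j * ad N k + ad N k * an N j
      = ((Complex.I ^ j)⁻¹ * Complex.I ^ k) •
        ((Dm j * site N j σm) * (Dp k * site N k σp)
          + (Dp k * site N k σp) * (Dm j * site N j σm)) := by
    rw [ad_eq, an_eq, smul_mul_smul_comm, smul_mul_smul_comm, mul_comm (Complex.I ^ k),
      smul_add]
  rw [hprod]
  have hDcomm : ∀ m m' : ℕ, Dm m * Dp m' = Dp m' * Dm m := by
    intro m m'
    rw [hDp, hDm, Matrix.diagonal_mul_diagonal, Matrix.diagonal_mul_diagonal]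
    have : (fun i : St N => (dstr N m i)⁻¹ * dstr N m' i)
        = fun i => dstr N m' i * (dstr N m i)⁻¹ := by funext v; ring
    rw [this]
  rcases lt_trichotomy j k with hlt | heq | hgt
  · rw [if_neg (Nat.ne_of_lt hlt)]
    have h1 : site N j σm * Dp k = -(Dp k * site N j σm) := by
      have h := diag_dstr_anticomm (k := k) hj hlt σm σm_diag id (fun x => rfl)
      simp only [id] at h
      have h' : (Matrix.diagonal (dstr N k) : Op N) * site N j σm
          = -(site N j σm * Matrix.diagonal (dstr N k)) := h
      rw [hDp]
      rw [h', neg_neg]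
    have h2 : site N k σp * Dm j = Dm j * site N k σp := by
      have h := diag_dstr_comm (j := j) hk (le_of_lt hlt) σp Inv.inv
      have h' : (Matrix.diagonal (fun v => (dstr N j v)⁻¹) : Op N) * site N k σp
          = site N k σp * Matrix.diagonal (fun v => (dstr N j v)⁻¹) := h
      rw [hDm, ← h']
    have hs : site N j σm * site N k σp = site N k σp * site N j σm :=
      site_comm hj hk (Nat.ne_of_lt hlt) σm σp
    have key : (Dm j * site N j σm) * (Dp k * site N k σp)
        + (Dp k * site N k σp) * (Dm j * site N j σm) = 0 := by
      calc (Dm j * site N j σm) * (Dp k * site N k σp)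
            + (Dp k * site N k σp) * (Dm j * site N j σm)
          = Dm j * (site N j σm * Dp k) * site N k σp
            + Dp k * (site N k σp * Dm j) * site N j σm := by noncomm_ring
        _ = -(Dm j * Dp k * (site N j σm * site N k σp))
            + Dp k * Dm j * (site N k σp * site N j σm) := by
            rw [h1, h2]; noncomm_ring
        _ = 0 := by rw [hs, ← hDcomm]; noncomm_ring
    rw [key, smul_zero]
  · subst heq
    rw [if_pos rfl]
    have h1 : site N j σm * Dp j = Dp j * site N j σm := by
      have h := diag_dstr_comm (j := j) hj le_rfl σm id
      simp only [id] at h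
      have h' : (Matrix.diagonal (dstr N j) : Op N) * site N j σm
          = site N j σm * Matrix.diagonal (dstr N j) := h
      rw [hDp, ← h']
    have h2 : site N j σp * Dm j = Dm j * site N j σp := by
      have h := diag_dstr_comm (j := j) hj le_rfl σp Inv.inv
      have h' : (Matrix.diagonal (fun v => (dstr N j v)⁻¹) : Op N) * site N j σp
          = site N j σp * Matrix.diagonal (fun v => (dstr N j v)⁻¹) := h
      rw [hDm, ← h']
    have hdm : Dm j * Dp j = 1 := diag_one_of _ (dstr_ne_zero j)
    have hdm' : Dp j * Dm j = 1 := by rw [← hDcomm]; exact hdm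
    have key : (Dm j * site N j σm) * (Dp j * site N j σp)
        + (Dp j * site N j σp) * (Dm j * site N j σm) = 1 := by
      calc (Dm j * site N j σm) * (Dp j * site N j σp)
            + (Dp j * site N j σp) * (Dm j * site N j σm)
          = Dm j * (site N j σm * Dp j) * site N j σp
            + Dp j * (site N j σp * Dm j) * site N j σm := by noncomm_ring
        _ = (Dm j * Dp j) * (site N j σm * site N j σp)
            + (Dp j * Dm j) * (site N j σp * site N j σm) := by
            rw [h1, h2]; noncomm_ring
        _ = site N j σm * site N j σp + site N j σp * site N j σm := by
            rw [hdm, hdm', one_mul, one_mul]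
        _ = 1 := by
            rw [site_mul_site_same hj, site_mul_site_same hj, ← site_add hj, σmp,
              site_one hj]
    rw [key, inv_mul_cancel₀ (pow_ne_zero j Complex.I_ne_zero), one_smul]
  · rw [if_neg (Nat.ne_of_gt hgt)]
    have h1 : site N j σm * Dp k = Dp k * site N j σm := by
      have h := diag_dstr_comm (j := k) hj (le_of_lt hgt) σm id
      simp only [id] at h
      have h' : (Matrix.diagonal (dstr N k) : Op N) * site N j σm
          = site N j σm * Matrix.diagonal (dstr N k) := h
      rw [hDp, ← h']
    have h2 : site N k σp * Dm j = -(Dm j * site N k σp) := by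
      have h := diag_dstr_anticomm (k := j) hk hgt σp σp_diag Inv.inv (fun x => inv_neg)
      have h' : (Matrix.diagonal (fun v => (dstr N j v)⁻¹) : Op N) * site N k σp
          = -(site N k σp * Matrix.diagonal (fun v => (dstr N j v)⁻¹)) := h
      rw [hDm]
      rw [show site N k σp * Matrix.diagonal (fun v => (dstr N j v)⁻¹)
          = -(Matrix.diagonal (fun v => (dstr N j v)⁻¹) * site N k σp) from by
        rw [h', neg_neg]]
    have hs : site N j σm * site N k σp = site N k σp * site N j σm :=
      site_comm hj hk (Nat.ne_of_lt hgt).symm σm σp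
    have key : (Dm j * site N j σm) * (Dp k * site N k σp)
        + (Dp k * site N k σp) * (Dm j * site N j σm) = 0 := by
      calc (Dm j * site N j σm) * (Dp k * site N k σp)
            + (Dp k * site N k σp) * (Dm j * site N j σm)
          = Dm j * (site N j σm * Dp k) * site N k σp
            + Dp k * (site N k σp * Dm j) * site N j σm := by noncomm_ring
        _ = Dm j * Dp k * (site N j σm * site N k σp)
            + -(Dp k * Dm j * (site N k σp * site N j σm)) := by
            rw [h1, h2]; noncomm_ring
        _ = 0 := by rw [hs, ← hDcomm]; noncomm_ring
    rw [key, smul_zero]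

end LatticeW

namespace LatticeW

variable {N : ℕ}

lemma sum_car (f g : ℕ → ℂ) :
    (∑ j ∈ Finset.range N, f j • ad N j) * (∑ j ∈ Finset.range N, g j • an N j)
      + (∑ j ∈ Finset.range N, g j • an N j) * (∑ j ∈ Finset.range N, f j • ad N j)
    = (∑ j ∈ Finset.range N, f j * g j) • (1 : Op N) := by
  set B : Op N := ∑ j ∈ Finset.range N, g j • an N j with hB
  calc (∑ j ∈ Finset.range N, f j • ad N j) * B + B * (∑ j ∈ Finset.range N, f j • ad N j)
      = ∑ j ∈ Finset.range N, ((f j • ad N j) * B + B * (f j • ad N j)) := by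
        rw [Finset.sum_mul, Finset.mul_sum, ← Finset.sum_add_distrib]
    _ = ∑ j ∈ Finset.range N, ∑ k ∈ Finset.range N,
          (f j * g k) • (ad N j * an N k + an N k * ad N j) := by
        refine Finset.sum_congr rfl fun j hj => ?_
        rw [hB, Finset.mul_sum, Finset.sum_mul, ← Finset.sum_add_distrib]
        refine Finset.sum_congr rfl fun k hk => ?_
        rw [smul_mul_smul_comm, smul_mul_smul_comm, mul_comm (g k) (f j), ← smul_add]
    _ = ∑ j ∈ Finset.range N, (f j * g j) • (1 : Op N) := by
        refine Finset.sum_congr rfl fun j hj => ?_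
        have : ∀ k ∈ Finset.range N, (f j * g k) • (ad N j * an N k + an N k * ad N j)
            = if k = j then (f j * g k) • (1 : Op N) else 0 := by
          intro k hk
          rw [add_comm, car (Finset.mem_range.1 hk) (Finset.mem_range.1 hj)]
          split_ifs <;> simp
        rw [Finset.sum_congr rfl this, Finset.sum_ite_eq' (Finset.range N) j
          (fun k => (f j * g k) • (1 : Op N)), if_pos hj]
    _ = (∑ j ∈ Finset.range N, f j * g j) • (1 : Op N) := by
        rw [Finset.sum_smul]

lemma theta_car (k k' : ℕ) :
    θd N k * θa N k' + θa N k' * θd N k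
      = ((-Complex.I) * ∑ j ∈ Finset.range N, Afun N k (j+1) * Afun N k' (j+1)) •
          (1 : Op N) := by
  rw [θd, θa, mul_smul_comm, smul_mul_assoc, ← smul_add,
    sum_car (fun j => Afun N k (j+1)) (fun j => Afun N k' (j+1)), smul_smul]

end LatticeW

namespace LatticeW

set_option maxHeartbeats 1000000 in
lemma geom_shift (x : ℂ) (hx : x ≠ 1) (n : ℕ) :
    ∑ j ∈ Finset.range n, x ^ (j + 1) = x * (x ^ n - 1) / (x - 1) := by
  have : ∑ j ∈ Finset.range n, x ^ (j + 1) = (∑ j ∈ Finset.range n, x ^ j) * x := by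
    rw [Finset.sum_mul]
    exact Finset.sum_congr rfl fun j _ => by rw [pow_succ]
  rw [this, geom_sum_eq hx, div_mul_eq_mul_div, mul_comm]

lemma afun_eq (N k : ℕ) (j : ℕ) :
    Afun N k j = (1/2 : ℂ) * (1 + Complex.I * (Complex.exp (Complex.I * (Real.pi : ℂ) * k / N))⁻¹)
        * (Complex.exp (Complex.I * (Real.pi : ℂ) * k / N)) ^ j
      - (1/2 : ℂ) * (1 + Complex.I * Complex.exp (Complex.I * (Real.pi : ℂ) * k / N))
        * ((Complex.exp (Complex.I * (Real.pi : ℂ) * k / N))⁻¹) ^ j := by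
  rw [Afun, ← Complex.exp_neg]
  congr 2
  · rw [← Complex.exp_nat_mul]
    congr 1
    ring
  · rw [← Complex.exp_nat_mul]
    congr 1
    ring

/-- `exp(iπm/N) ≠ 1` for `0 < m < 2N` -/
lemma exp_ne_one {N : ℕ} (hN : 0 < N) (m : ℤ) (h0 : 0 < m) (h2 : m < 2 * N) :
    Complex.exp (Complex.I * (Real.pi : ℂ) * m / N) ≠ 1 := by
  intro h
  rw [Complex.exp_eq_one_iff] at h
  obtain ⟨z, hz⟩ := h
  have hNne : (N : ℂ) ≠ 0 := Nat.cast_ne_zero.2 hN.ne'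
  have hpi : (Real.pi : ℂ) ≠ 0 := Complex.ofReal_ne_zero.2 Real.pi_ne_zero
  have hm : (m : ℂ) = 2 * z * N := by
    field_simp at hz
    have h1 : Complex.I * (Real.pi : ℂ) * m = Complex.I * (Real.pi : ℂ) * (2 * z * N) := by
      rw [hz]; ring
    exact mul_left_cancel₀ (mul_ne_zero Complex.I_ne_zero hpi) h1
  have hm' : m = 2 * z * N := by exact_mod_cast hm
  rcases le_or_gt z 0 with hz0 | hz0
  · have : (2 : ℤ) * z * N ≤ 0 := by
      have : (0:ℤ) ≤ N := Int.natCast_nonneg N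
      nlinarith
    omega
  · have : (2 : ℤ) * N ≤ 2 * z * N := by nlinarith [(Int.natCast_nonneg N : (0:ℤ) ≤ (N:ℤ))]
    omega

lemma exp_pow_N {N : ℕ} (hN : 0 < N) (m : ℕ) :
    (Complex.exp (Complex.I * (Real.pi : ℂ) * m / N)) ^ N = (-1 : ℂ) ^ m := by
  have hNne : (N : ℂ) ≠ 0 := Nat.cast_ne_zero.2 hN.ne'
  rw [← Complex.exp_nat_mul]
  have : (N : ℂ) * (Complex.I * (Real.pi : ℂ) * m / N) = m * ((Real.pi : ℂ) * Complex.I) := by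
    field_simp
  rw [this, Complex.exp_nat_mul, Complex.exp_pi_mul_I]

lemma neg_one_pow_inv (m : ℕ) : ((-1 : ℂ) ^ m)⁻¹ = (-1 : ℂ) ^ m := by
  rcases Nat.even_or_odd m with h | h
  · rw [h.neg_one_pow]; norm_num
  · rw [h.neg_one_pow]; norm_num

end LatticeW

namespace LatticeW

private lemma Isq : (Complex.I)^2 = -1 := Complex.I_sq

/-- combine a geometric pair into a constant -/
lemma pair (a b x : ℂ) (hx0 : x ≠ 0) (hx1 : x - 1 ≠ 0) (hxi : x⁻¹ - 1 ≠ 0)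
    (hab : a * x - b = (x - 1)/2) :
    a * (x * ((-1:ℂ) - 1)/(x - 1)) + b * (x⁻¹ * ((-1:ℂ)⁻¹ - 1)/(x⁻¹ - 1)) = -1 := by
  have e2 : x⁻¹ * ((-1:ℂ)⁻¹ - 1)/(x⁻¹ - 1) = 2/(x - 1) := by
    rw [div_eq_div_iff hxi hx1]
    field_simp
    ring
  rw [e2, mul_div_assoc'] at *
  rw [mul_div_assoc', ← add_div, div_eq_iff hx1]
  linear_combination (-2 : ℂ) * hab

lemma hab1 (w w' : ℂ) (hw : w ≠ 0) (hw' : w' ≠ 0) :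
    ((1/2 : ℂ)*(1+Complex.I*w⁻¹)) * ((1/2 : ℂ)*(1+Complex.I*w'⁻¹)) * (w*w')
      - ((1/2 : ℂ)*(1+Complex.I*w)) * ((1/2 : ℂ)*(1+Complex.I*w'))
    = (w*w' - 1)/2 := by
  have hwi : w⁻¹ * w = 1 := inv_mul_cancel₀ hw
  have hw'i : w'⁻¹ * w' = 1 := inv_mul_cancel₀ hw'
  linear_combination ((Complex.I*w' - 1)/4 - (w'⁻¹*w' - 1)/4) * hwi
    + ((Complex.I*w - 1)/4) * hw'i
    + ((1 + (w⁻¹*w - 1) + (w'⁻¹*w' - 1) + (w⁻¹*w - 1)*(w'⁻¹*w' - 1) - w*w')/4) * Isq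

lemma hab2 (w w' : ℂ) (hw : w ≠ 0) (hw' : w' ≠ 0) :
    ((1/2 : ℂ)*(1+Complex.I*w⁻¹)) * ((1/2 : ℂ)*(1+Complex.I*w')) * (w*w'⁻¹)
      - ((1/2 : ℂ)*(1+Complex.I*w)) * ((1/2 : ℂ)*(1+Complex.I*w'⁻¹))
    = (w*w'⁻¹ - 1)/2 := by
  have hwi : w⁻¹ * w = 1 := inv_mul_cancel₀ hw
  have hw'i : w' * w'⁻¹ = 1 := mul_inv_cancel₀ hw'
  linear_combination ((Complex.I*w'⁻¹ - 1)/4 - (w'*w'⁻¹ - 1)/4) * hwi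
    + ((Complex.I*w - 1)/4) * hw'i
    + ((1 + (w⁻¹*w - 1) + (w'*w'⁻¹ - 1) + (w⁻¹*w - 1)*(w'*w'⁻¹ - 1) - w*w'⁻¹)/4) * Isq

set_option maxHeartbeats 1000000 in
lemma key_zero' (n : ℕ) (w w' : ℂ) (hw : w ≠ 0) (hw' : w' ≠ 0)
    (h1 : w * w' ≠ 1) (h2 : w * w'⁻¹ ≠ 1) (ε : ℂ)
    (e1 : (w * w') ^ n = ε) (e2 : (w * w'⁻¹) ^ n = ε) (hε : ε * ε = 1) :
    ∑ j ∈ Finset.range n,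
      ((1/2 : ℂ) * (1 + Complex.I * w⁻¹) * w ^ (j+1)
          - (1/2 : ℂ) * (1 + Complex.I * w) * (w⁻¹) ^ (j+1)) *
      ((1/2 : ℂ) * (1 + Complex.I * w'⁻¹) * w' ^ (j+1)
          - (1/2 : ℂ) * (1 + Complex.I * w') * (w'⁻¹) ^ (j+1)) = 0 := by
  have expand : ∀ j : ℕ,
      ((1/2 : ℂ) * (1 + Complex.I * w⁻¹) * w ^ (j+1)
          - (1/2 : ℂ) * (1 + Complex.I * w) * (w⁻¹) ^ (j+1)) *
      ((1/2 : ℂ) * (1 + Complex.I * w'⁻¹) * w' ^ (j+1)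
          - (1/2 : ℂ) * (1 + Complex.I * w') * (w'⁻¹) ^ (j+1))
      = ((1/2) * (1 + Complex.I * w⁻¹) * ((1/2) * (1 + Complex.I * w'⁻¹))) * (w * w') ^ (j+1)
        + ((1/2) * (1 + Complex.I * w) * ((1/2) * (1 + Complex.I * w'))) * ((w * w')⁻¹) ^ (j+1)
        - ((1/2) * (1 + Complex.I * w⁻¹) * ((1/2) * (1 + Complex.I * w'))) * (w * w'⁻¹) ^ (j+1)
        - ((1/2) * (1 + Complex.I * w) * ((1/2) * (1 + Complex.I * w'⁻¹))) * ((w * w'⁻¹)⁻¹) ^ (j+1) := by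
    intro j
    rw [mul_pow, mul_pow, mul_inv, mul_inv, inv_inv, mul_pow, mul_pow]
    ring
  rw [Finset.sum_congr rfl fun j _ => expand j]
  have h1' : (w * w')⁻¹ ≠ 1 := fun h => h1 (by rwa [inv_eq_one] at h)
  have h2' : (w * w'⁻¹)⁻¹ ≠ 1 := fun h => h2 (by rwa [inv_eq_one] at h)
  simp only [Finset.sum_sub_distrib, Finset.sum_add_distrib, ← Finset.mul_sum]
  rw [geom_shift _ h1, geom_shift _ h1', geom_shift _ h2, geom_shift _ h2',
    inv_pow, inv_pow, e1, e2]
  rcases mul_self_eq_one_iff.1 hε with h | h <;> subst h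
  · norm_num
  · have hx1 : w * w' - 1 ≠ 0 := sub_ne_zero.2 h1
    have hx2 : w * w'⁻¹ - 1 ≠ 0 := sub_ne_zero.2 h2
    have hxi1 : (w * w')⁻¹ - 1 ≠ 0 := sub_ne_zero.2 h1'
    have hxi2 : (w * w'⁻¹)⁻¹ - 1 ≠ 0 := sub_ne_zero.2 h2'
    have hA := pair _ _ _ (mul_ne_zero hw hw') hx1 hxi1 (hab1 w w' hw hw')
    have hB := pair _ _ _ (mul_ne_zero hw (inv_ne_zero hw')) hx2 hxi2 (hab2 w w' hw hw')
    linear_combination hA - hB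

set_option maxHeartbeats 1000000 in
lemma key_diag (n : ℕ) (w : ℂ) (hw : w ≠ 0) (h1 : w * w ≠ 1) (e1 : (w * w) ^ n = 1) :
    ∑ j ∈ Finset.range n,
      ((1/2 : ℂ) * (1 + Complex.I * w⁻¹) * w ^ (j+1)
          - (1/2 : ℂ) * (1 + Complex.I * w) * (w⁻¹) ^ (j+1)) *
      ((1/2 : ℂ) * (1 + Complex.I * w⁻¹) * w ^ (j+1)
          - (1/2 : ℂ) * (1 + Complex.I * w) * (w⁻¹) ^ (j+1))
    = -(n : ℂ) * Complex.I * (w + w⁻¹) / 2 := by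
  have expand : ∀ j : ℕ,
      ((1/2 : ℂ) * (1 + Complex.I * w⁻¹) * w ^ (j+1)
          - (1/2 : ℂ) * (1 + Complex.I * w) * (w⁻¹) ^ (j+1)) *
      ((1/2 : ℂ) * (1 + Complex.I * w⁻¹) * w ^ (j+1)
          - (1/2 : ℂ) * (1 + Complex.I * w) * (w⁻¹) ^ (j+1))
      = ((1/2) * (1 + Complex.I * w⁻¹) * ((1/2) * (1 + Complex.I * w⁻¹))) * (w * w) ^ (j+1)
        + ((1/2) * (1 + Complex.I * w) * ((1/2) * (1 + Complex.I * w))) * ((w * w)⁻¹) ^ (j+1)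
        - 2 * ((1/2) * (1 + Complex.I * w⁻¹) * ((1/2) * (1 + Complex.I * w))) := by
    intro j
    have hc : (w⁻¹) ^ (j+1) * w ^ (j+1) = 1 := by
      rw [← mul_pow, inv_mul_cancel₀ hw, one_pow]
    rw [mul_pow, mul_inv, mul_pow]
    linear_combination (-2 * ((1/2 : ℂ) * (1 + Complex.I * w⁻¹) *
      ((1/2) * (1 + Complex.I * w)))) * hc
  rw [Finset.sum_congr rfl fun j _ => expand j]
  have h1' : (w * w)⁻¹ ≠ 1 := fun h => h1 (by rwa [inv_eq_one] at h)
  simp only [Finset.sum_sub_distrib, Finset.sum_add_distrib, ← Finset.mul_sum]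
  rw [geom_shift _ h1, geom_shift _ h1', inv_pow, e1, Finset.sum_const, Finset.card_range,
    nsmul_eq_mul]
  have hwi : w⁻¹ * w = 1 := inv_mul_cancel₀ hw
  norm_num
  linear_combination (-(n:ℂ)/2 * Complex.I^2) * hwi + (-(n:ℂ)/2) * Isq

end LatticeW

namespace LatticeW

lemma exp_ne_one' {N : ℕ} (hN : 0 < N) (m : ℤ) (h0 : m ≠ 0)
    (hlo : -(2 * (N:ℤ)) < m) (hhi : m < 2 * N) :
    Complex.exp (Complex.I * (Real.pi : ℂ) * m / N) ≠ 1 := by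
  rcases lt_or_gt_of_ne h0 with hm | hm
  · have key : Complex.exp (Complex.I * (Real.pi : ℂ) * m / N)
        = (Complex.exp (Complex.I * (Real.pi : ℂ) * (-m : ℤ) / N))⁻¹ := by
      rw [← Complex.exp_neg]
      congr 1
      push_cast
      ring
    rw [key]
    intro h
    rw [inv_eq_one] at h
    exact exp_ne_one hN (-m) (by omega) (by omega) h
  · exact exp_ne_one hN m hm hhi

lemma exp_mul_exp {N k k' : ℕ} :
    Complex.exp (Complex.I * (Real.pi : ℂ) * k / N) *
      Complex.exp (Complex.I * (Real.pi : ℂ) * k' / N)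
    = Complex.exp (Complex.I * (Real.pi : ℂ) * ((k + k' : ℤ)) / N) := by
  rw [← Complex.exp_add]
  congr 1
  push_cast
  ring

lemma exp_mul_exp_inv {N k k' : ℕ} :
    Complex.exp (Complex.I * (Real.pi : ℂ) * k / N) *
      (Complex.exp (Complex.I * (Real.pi : ℂ) * k' / N))⁻¹
    = Complex.exp (Complex.I * (Real.pi : ℂ) * ((k - k' : ℤ)) / N) := by
  rw [← Complex.exp_neg, ← Complex.exp_add]
  congr 1
  push_cast
  ring

lemma scalar_off {N : ℕ} (hN : 0 < N) (k k' : ℕ) (hk0 : 0 < k) (hkN : k < N)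
    (hk'0 : 0 < k') (hk'N : k' < N) (hkk' : k ≠ k') :
    ∑ j ∈ Finset.range N, Afun N k (j+1) * Afun N k' (j+1) = 0 := by
  set w := Complex.exp (Complex.I * (Real.pi : ℂ) * k / N) with hw
  set w' := Complex.exp (Complex.I * (Real.pi : ℂ) * k' / N) with hw'
  have key := key_zero' N w w' (Complex.exp_ne_zero _) (Complex.exp_ne_zero _)
    (by
      rw [hw, hw', exp_mul_exp]
      exact exp_ne_one' hN _ (by omega) (by omega) (by omega))
    (by
      rw [hw, hw', exp_mul_exp_inv]
      exact exp_ne_one' hN _ (by omega) (by omega) (by omega))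
    ((-1 : ℂ)^(k + k'))
    (by
      rw [hw, hw', exp_mul_exp]
      have : ((k + k' : ℤ) : ℂ) = ((k + k' : ℕ) : ℂ) := by push_cast; ring
      rw [this, exp_pow_N hN])
    (by
      rw [hw, hw', mul_pow, inv_pow, exp_pow_N hN, exp_pow_N hN, neg_one_pow_inv,
        ← pow_add])
    (by
      rw [← pow_add]
      exact Even.neg_one_pow ⟨k + k', rfl⟩)
  rw [← key]
  exact Finset.sum_congr rfl fun j _ => by rw [afun_eq, afun_eq]

lemma scalar_diag {N : ℕ} (hN : 0 < N) (k : ℕ) (hk0 : 0 < k) (hkN : k < N) :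
    ∑ j ∈ Finset.range N, Afun N k (j+1) * Afun N k (j+1)
    = -(N : ℂ) * Complex.I *
        (Complex.exp (Complex.I * (Real.pi : ℂ) * k / N) +
          (Complex.exp (Complex.I * (Real.pi : ℂ) * k / N))⁻¹) / 2 := by
  set w := Complex.exp (Complex.I * (Real.pi : ℂ) * k / N) with hw
  have key := key_diag N w (Complex.exp_ne_zero _)
    (by
      rw [hw, exp_mul_exp]
      exact exp_ne_one' hN _ (by omega) (by omega) (by omega))
    (by
      rw [hw, exp_mul_exp]
      have : ((k + k : ℤ) : ℂ) = ((k + k : ℕ) : ℂ) := by push_cast; ring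
      rw [this, exp_pow_N hN]
      exact Even.neg_one_pow ⟨k, two_mul k ▸ rfl⟩)
  rw [← key]
  exact Finset.sum_congr rfl fun j _ => by rw [afun_eq]

lemma exp_pi_div_two : Complex.exp ((Real.pi : ℂ)/2 * Complex.I) = Complex.I := by
  have h : ((Real.pi/2 : ℝ) : ℂ) = (Real.pi : ℂ)/2 := by push_cast; ring
  rw [← h, Complex.exp_mul_I, ← Complex.ofReal_cos, ← Complex.ofReal_sin,
    Real.cos_pi_div_two, Real.sin_pi_div_two]
  simp

lemma afun_half {N M : ℕ} (hM : 0 < M) (hNM : N = 2*M) (j : ℕ) :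
    Afun N M j = Complex.I ^ j := by
  have hN0 : (N:ℂ) ≠ 0 := Nat.cast_ne_zero.2 (by omega)
  have e1 : Complex.I * (Real.pi : ℂ) * M / N = (Real.pi : ℂ)/2 * Complex.I := by
    rw [div_eq_iff hN0, hNM]; push_cast; ring
  have h4 : Complex.exp (Complex.I * (Real.pi:ℂ) * M / N) = Complex.I := by
    rw [e1, exp_pi_div_two]
  have h3 : Complex.exp (-(Complex.I * (Real.pi:ℂ) * M / N)) = -Complex.I := by
    rw [Complex.exp_neg, h4, Complex.inv_I]
  have h5 : Complex.exp (Complex.I * (Real.pi:ℂ) * M * j / N) = Complex.I ^ j := by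
    have e5 : Complex.I * (Real.pi : ℂ) * M * j / N = (j:ℂ) * ((Real.pi : ℂ)/2 * Complex.I) := by
      rw [div_eq_iff hN0, hNM]; push_cast; ring
    rw [e5, Complex.exp_nat_mul, exp_pi_div_two]
  have h6 : Complex.exp (-(Complex.I * (Real.pi:ℂ) * M * j / N)) = (Complex.I ^ j)⁻¹ := by
    rw [Complex.exp_neg, h5]
  rw [Afun, h3, h4, h5, h6]
  linear_combination (-(Complex.I^j)/2 - ((Complex.I^j)⁻¹)/2) * Isq

lemma gsum (c : ℂ) (M : ℕ) :
    ∑ j ∈ Finset.range (2*M), (-1:ℂ)^(j+1) * (c - (↑j+1) + (1-(-1:ℂ)^(j+1))/2)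
      = -(2*M : ℂ) := by
  induction M with
  | zero => simp
  | succ m ih =>
    have h2 : 2*(m+1) = (2*m) + 1 + 1 := by ring
    rw [h2, Finset.sum_range_succ, Finset.sum_range_succ, ih]
    have ho : (-1:ℂ)^(2*m+1) = -1 := by
      rw [pow_succ, pow_mul]; norm_num
    have he : (-1:ℂ)^(2*m+1+1) = 1 := by
      rw [pow_succ, ho]; norm_num
    rw [ho, he]
    push_cast
    ring

end LatticeW

namespace LatticeW

lemma sin_pos_aux {N : ℕ} (hN : 0 < N) (m : ℤ) (h0 : 0 < m) (hm : m < (N:ℤ)) :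
    0 < Real.sin (Real.pi * (m:ℝ) / N) := by
  apply Real.sin_pos_of_pos_of_lt_pi
  · have h1 : (0:ℝ) < (m:ℝ) := by exact_mod_cast h0
    have h2 : (0:ℝ) < (N:ℝ) := by exact_mod_cast hN
    positivity
  · have h1 : (m:ℝ) < (N:ℝ) := by exact_mod_cast hm
    have h2 : (0:ℝ) < (N:ℝ) := by exact_mod_cast hN
    rw [div_lt_iff₀ h2]
    nlinarith [Real.pi_pos]

end LatticeW

set_option maxHeartbeats 4000000 in
theorem LatticeW.eta_anticomm_aux (N : ℕ) (hN : 2 ≤ N) (hev : Even N) :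
    (∀ n n' : ℤ, -(N : ℤ)/2 < n → n < (N : ℤ)/2 → -(N : ℤ)/2 < n' → n' < (N : ℤ)/2 →
      ηp N n * ηm N n' + ηm N n' * ηp N n
        = (if n + n' = 0 then (n : ℂ) else 0) • (1 : Op N)) ∧
    ηp N 0 * γm N + γm N * ηp N 0 = 1 ∧
    ηm N 0 * γp N + γp N * ηm N 0 = -1 := by
  have hmod : N % 2 = 0 := Nat.even_iff.1 hev
  have hM0 : 0 < N / 2 := by omega
  have hNM : N = 2 * (N / 2) := by omega
  have hNC : (N:ℂ) ≠ 0 := Nat.cast_ne_zero.2 (by omega)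
  have hsqpi : ((Real.sqrt Real.pi : ℝ) : ℂ) ≠ 0 := by
    rw [Complex.ofReal_ne_zero]
    exact Real.sqrt_ne_zero'.2 Real.pi_pos
  -- the γ sum
  have hγsum : ∑ j ∈ Finset.range N, Afun N (N/2) (j+1) * γcoef N (j+1) = -(N:ℂ) := by
    have hcg : ∀ j ∈ Finset.range N, Afun N (N/2) (j+1) * γcoef N (j+1)
        = (-1:ℂ)^(j+1) * ((N:ℂ)/2 - ((j:ℂ)+1) + (1-(-1:ℂ)^(j+1))/2) := by
      intro j _
      rw [afun_half hM0 hNM, γcoef]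
      have hII : Complex.I^(j+1) * Complex.I^(j+1) = (-1:ℂ)^(j+1) := by
        rw [← mul_pow, Complex.I_mul_I]
      push_cast
      linear_combination ((N:ℂ)/2 - ((j:ℂ)+1) + (1-(-1:ℂ)^(j+1))/2) * hII
    rw [Finset.sum_congr rfl hcg]
    have hr : Finset.range N = Finset.range (2*(N/2)) := by rw [← hNM]
    rw [hr, gsum]
    norm_cast
    omega
  refine ⟨?_, ?_, ?_⟩
  · -- part 1
    intro n n' hn1 hn2 hn'1 hn'2
    rw [ηp, ηm]
    set k := ((N:ℤ)/2 + n).toNat with hkdef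
    set k' := ((N:ℤ)/2 - n').toNat with hk'def
    have hk : (k : ℤ) = (N:ℤ)/2 + n := by omega
    have hk' : (k' : ℤ) = (N:ℤ)/2 - n' := by omega
    have hk0 : 0 < k := by omega
    have hkN : k < N := by omega
    have hk'0 : 0 < k' := by omega
    have hk'N : k' < N := by omega
    rw [smul_mul_smul_comm, smul_mul_smul_comm, mul_comm (ηcoef N n') (ηcoef N n),
      ← smul_add, theta_car, smul_smul]
    by_cases hc : n + n' = 0
    · have hkk' : k' = k := by omega
      rw [if_pos hc, hkk', scalar_diag (by omega) k hk0 hkN]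
      congr 1
      have hn'eq : n' = -n := by omega
      subst hn'eq
      set w := Complex.exp (Complex.I * (Real.pi : ℂ) * k / N) with hwdef
      set x : ℂ := (Real.pi:ℂ) * (n:ℂ) / N with hxdef
      have h2k : (2*(k:ℂ)) = (N:ℂ) + 2*(n:ℂ) := by
        have : (2*(k:ℤ)) = (N:ℤ) + 2*n := by omega
        exact_mod_cast this
      have hxN : x * N = (Real.pi:ℂ) * (n:ℂ) := div_mul_cancel₀ _ hNC
      have harg : Complex.I * (Real.pi : ℂ) * k / N = ((Real.pi:ℂ)/2 + x) * Complex.I := by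
        rw [div_eq_iff hNC]
        linear_combination ((Real.pi:ℂ)*Complex.I/2) * h2k - Complex.I * hxN
      have hcos : Complex.cos ((Real.pi:ℂ)/2 + x) = -Complex.sin x := by
        rw [Complex.cos_add]
        rw [show (Real.pi:ℂ)/2 = ((Real.pi/2 : ℝ):ℂ) from by push_cast; ring,
          ← Complex.ofReal_cos, ← Complex.ofReal_sin, Real.cos_pi_div_two,
          Real.sin_pi_div_two]
        simp
      have hwsum : w + w⁻¹ = -2 * Complex.sin x := by
        rw [hwdef, harg, ← Complex.exp_neg, ← neg_mul, Complex.exp_mul_I,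
          Complex.exp_mul_I, Complex.cos_neg, Complex.sin_neg, hcos]
        ring
      rw [hwsum]
      have hred : -Complex.I * (-(N:ℂ) * Complex.I * (-2*Complex.sin x) / 2)
          = (N:ℂ) * Complex.sin x := by
        linear_combination (-(N:ℂ)*Complex.sin x) * Isq
      rw [hred]
      have hsin : Complex.sin x = ((Real.sin (Real.pi * (n:ℝ) / N) : ℝ) : ℂ) := by
        rw [Complex.ofReal_sin]
        congr 1
        push_cast
        ring
      by_cases hn0 : n = 0
      · subst hn0
        simp [hxdef]
      · set s : ℝ := Real.sin (Real.pi * (n:ℝ) / N) with hsdef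
        have hNpos : 0 < N := by omega
        have hns : 0 < (n:ℝ) * s := by
          rcases lt_or_gt_of_ne hn0 with h | h
          · have : 0 < Real.sin (Real.pi * ((-n : ℤ):ℝ) / N) :=
              sin_pos_aux hNpos (-n) (by omega) (by omega)
            have hs' : s < 0 := by
              rw [hsdef]
              have : Real.sin (Real.pi * ((-n:ℤ):ℝ)/N) = -Real.sin (Real.pi * (n:ℝ)/N) := by
                push_cast
                rw [show Real.pi * (-(n:ℝ))/N = -(Real.pi * (n:ℝ)/N) from by ring,
                  Real.sin_neg]
              nlinarith [this]
            have hnn : (n:ℝ) < 0 := by exact_mod_cast h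
            nlinarith
          · have hs' : 0 < s := sin_pos_aux hNpos n h (by omega)
            have hnn : (0:ℝ) < (n:ℝ) := by exact_mod_cast h
            nlinarith
        have hsne : (N:ℝ) * s ≠ 0 := by
          have hNr : (0:ℝ) < (N:ℝ) := by exact_mod_cast hNpos
          rcases lt_or_gt_of_ne hn0 with h | h
          · have hnn : (n:ℝ) < 0 := by exact_mod_cast h
            have : s < 0 := by nlinarith
            nlinarith
          · have hnn : (0:ℝ) < (n:ℝ) := by exact_mod_cast h
            have : 0 < s := by nlinarith
            nlinarith
        have hNr : (0:ℝ) < (N:ℝ) := by exact_mod_cast hNpos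
        have hr : 0 ≤ (n:ℝ)/((N:ℝ)*s) := by
          rw [div_nonneg_iff]
          rcases lt_or_gt_of_ne hn0 with h | h
          · right
            have hnn : (n:ℝ) < 0 := by exact_mod_cast h
            have hs : s < 0 := by nlinarith
            exact ⟨hnn.le, by nlinarith⟩
          · left
            have hnn : (0:ℝ) < (n:ℝ) := by exact_mod_cast h
            have hs : 0 < s := by nlinarith
            exact ⟨hnn.le, by nlinarith⟩
        have hcoef : ηcoef N n = ((Real.sqrt ((n:ℝ)/((N:ℝ)*s)) : ℝ) : ℂ) := by
          rw [ηcoef, if_neg hn0, hsdef]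
        have hcoef' : ηcoef N (-n) = ((Real.sqrt ((n:ℝ)/((N:ℝ)*s)) : ℝ) : ℂ) := by
          rw [ηcoef, if_neg (neg_ne_zero.2 hn0)]
          congr 2
          push_cast
          rw [show Real.pi * (-(n:ℝ))/N = -(Real.pi * (n:ℝ)/N) from by ring, Real.sin_neg]
          rw [mul_neg, neg_div_neg_eq, hsdef]
        rw [hcoef, hcoef', hsin]
        have key : Real.sqrt ((n:ℝ)/((N:ℝ)*s)) * Real.sqrt ((n:ℝ)/((N:ℝ)*s)) * ((N:ℝ) * s)
            = (n:ℝ) := by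
          rw [Real.mul_self_sqrt hr, div_mul_cancel₀ _ hsne]
        exact_mod_cast key
    · have hkk' : k ≠ k' := by omega
      rw [if_neg hc, scalar_off (by omega) k k' hk0 hkN hk'0 hk'N hkk']
      simp
  · -- part 2
    have hη0 : ηp N 0 = (((Real.sqrt Real.pi : ℝ) : ℂ))⁻¹ • θd N (N/2) := by
      rw [ηp, ηcoef, if_pos rfl, show ((N:ℤ)/2 + 0).toNat = N/2 from by omega,
        Complex.ofReal_inv]
    rw [hη0, γm, θd, smul_mul_smul_comm, smul_mul_smul_comm,
      mul_comm (-((Real.sqrt Real.pi : ℂ) / N)) (((Real.sqrt Real.pi : ℝ) : ℂ))⁻¹,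
      ← smul_add, sum_car, hγsum, smul_smul]
    rw [show (((Real.sqrt Real.pi : ℝ) : ℂ))⁻¹ * (-((Real.sqrt Real.pi : ℂ) / N)) * (-(N:ℂ))
        = 1 from by field_simp]
    exact one_smul _ _
  · -- part 3
    have hη0 : ηm N 0 = ((((Real.sqrt Real.pi : ℝ) : ℂ))⁻¹ * (-Complex.I)) •
        ∑ j ∈ Finset.range N, Afun N (N/2) (j+1) • an N j := by
      rw [ηm, ηcoef, if_pos rfl, show ((N:ℤ)/2 - 0).toNat = N/2 from by omega,
        Complex.ofReal_inv, θa, smul_smul]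
    have hγ' : ∑ j ∈ Finset.range N, γcoef N (j+1) * Afun N (N/2) (j+1) = -(N:ℂ) := by
      rw [← hγsum]
      exact Finset.sum_congr rfl fun j _ => mul_comm _ _
    rw [hη0, γp, smul_mul_smul_comm, smul_mul_smul_comm,
      mul_comm (Complex.I * (Real.sqrt Real.pi : ℂ) / N)
        ((((Real.sqrt Real.pi : ℝ) : ℂ))⁻¹ * (-Complex.I)),
      ← smul_add, add_comm ((∑ j ∈ Finset.range N, Afun N (N/2) (j+1) • an N j) *
        (∑ j ∈ Finset.range N, γcoef N (j+1) • ad N j)) _, sum_car, hγ', smul_smul]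
    rw [show (((Real.sqrt Real.pi : ℝ) : ℂ))⁻¹ * (-Complex.I) *
        (Complex.I * (Real.sqrt Real.pi : ℂ) / N) * (-(N:ℂ)) = -1 from by
      field_simp
      linear_combination Isq]
    rw [neg_smul, one_smul]


/-- anticommutation relations of the rescaled modes `η^±_n` and `γ^±`. -/
theorem LatticeW.eta_anticomm (N : ℕ) (hN : 2 ≤ N) (hev : Even N) :
    (∀ n n' : ℤ, -(N : ℤ)/2 < n → n < (N : ℤ)/2 → -(N : ℤ)/2 < n' → n' < (N : ℤ)/2 →
      ηp N n * ηm N n' + ηm N n' * ηp N n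
        = (if n + n' = 0 then (n : ℂ) else 0) • (1 : Op N)) ∧
    ηp N 0 * γm N + γm N * ηp N 0 = 1 ∧
    ηm N 0 * γp N + γp N * ηm N 0 = -1 := by
  exact LatticeW.eta_anticomm_aux N hN hev
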